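/- If $w_+, w_-$ are nonzero complex numbers with $w_+ + w_- = 1$ and the angle between $w_+$ and $w_-$ does not exceed $\theta$ for some $0 \le \theta < \pi$, then $|\mathrm{Im}\,w_+| + |\mathrm{Im}\,w_-| \le \tan(\theta/2)$. -/

import Mathlib

noncomputable def cangle (u v : ℂ) : ℝ :=
  Real.arccos ((u * (starRingEnd ℂ) v).re / (‖u‖ * ‖v‖))

set_option maxHeartbeats 1000000 in
theorem stmt4 (θ : ℝ) (hθ0 : 0 ≤ θ) (hθπ : θ < Real.pi)
    (wp wm : ℂ) (hwp : wp ≠ 0) (hwm : wm ≠ 0)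
    (hsum : wp + wm = 1)
    (hang : cangle wp wm ≤ θ) :
    |wp.im| + |wm.im| ≤ Real.tan (θ / 2) := by
  obtain ⟨y, hy⟩ : ∃ y, y = wp.im := ⟨_, rfl⟩
  have hre : wm.re = 1 - wp.re := by
    have := congrArg Complex.re hsum; simp [Complex.add_re] at this; linarith
  have him : wm.im = -y := by
    have := congrArg Complex.im hsum; simp [Complex.add_im] at this; linarith
  obtain ⟨p, hpdef⟩ : ∃ p, p = ‖wp‖ * ‖wm‖ := ⟨_, rfl⟩
  have hp : 0 < p := hpdef ▸ mul_pos (norm_pos_iff.mpr hwp) (norm_pos_iff.mpr hwm)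
  obtain ⟨r, hrdef⟩ : ∃ r, r = (wp * (starRingEnd ℂ) wm).re := ⟨_, rfl⟩
  have habs : ‖wp * (starRingEnd ℂ) wm‖ = p := by
    rw [norm_mul, Complex.norm_conj, hpdef]
  have himprod : (wp * (starRingEnd ℂ) wm).im = y := by
    simp [Complex.mul_im, hre, him, ← hy]; ring
  have hr2 : r ^ 2 + y ^ 2 = p ^ 2 := by
    have h := Complex.sq_norm (wp * (starRingEnd ℂ) wm)
    rw [habs, Complex.normSq_apply, himprod, ← hrdef] at h
    nlinarith
  obtain ⟨c, hcdef⟩ : ∃ c, c = r / p := ⟨_, rfl⟩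
  have hrc : r = c * p := by rw [hcdef]; field_simp
  have hcle : |c| ≤ 1 := by
    have h1 : |r| ≤ p := by rw [hrdef, ← habs]; exact Complex.abs_re_le_norm _
    rw [hcdef, abs_div, abs_of_pos hp, div_le_one hp]
    exact h1
  have hc1 : c ≤ 1 := (abs_le.mp hcle).2
  have hcm1 : -1 ≤ c := (abs_le.mp hcle).1
  have hangle : cangle wp wm = Real.arccos c := by
    rw [cangle, hcdef, hrdef, hpdef]
  obtain ⟨α, hα⟩ : ∃ α, α = Real.arccos c := ⟨_, rfl⟩
  have hα0 : 0 ≤ α := hα ▸ Real.arccos_nonneg c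
  have hαθ : α ≤ θ := by rw [hα, ← hangle]; exact hang
  have hαπ : α < Real.pi := lt_of_le_of_lt hαθ hθπ
  have hcgt : -1 < c := by
    by_contra h
    push_neg at h
    have : α = Real.pi := hα ▸ Real.arccos_eq_pi.mpr h
    linarith
  have h1c : 0 < 1 + c := by linarith
  have hcos : Real.cos α = c := hα ▸ Real.cos_arccos hcm1 hc1
  have hy2 : y ^ 2 = p ^ 2 * (1 - c ^ 2) := by
    have h : (c * p) ^ 2 + y ^ 2 = p ^ 2 := by rw [← hrc]; exact hr2
    nlinarith
  have h1mc : (0:ℝ) ≤ 1 - c ^ 2 := by nlinarith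
  have habsy : |y| = p * Real.sqrt (1 - c ^ 2) := by
    rw [← Real.sqrt_sq_eq_abs, hy2, Real.sqrt_mul (sq_nonneg p),
      Real.sqrt_sq hp.le]
  have hkey : 2 * p * (1 + c) ≤ 1 := by
    have h1 : ‖wp + wm‖ = 1 := by rw [hsum]; simp
    have h2 : Complex.normSq (wp + wm) =
        Complex.normSq wp + Complex.normSq wm + 2 * r := by
      rw [hrdef]; exact Complex.normSq_add wp wm
    have h3 : Complex.normSq (wp + wm) = 1 := by
      rw [← Complex.sq_norm, h1]; norm_num
    have h4 : Complex.normSq wp = ‖wp‖ ^ 2 := (Complex.sq_norm wp).symm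
    have h5 : Complex.normSq wm = ‖wm‖ ^ 2 := (Complex.sq_norm wm).symm
    have h6 : 2 * p ≤ ‖wp‖ ^ 2 + ‖wm‖ ^ 2 := by
      rw [hpdef]; nlinarith [sq_nonneg (‖wp‖ - ‖wm‖)]
    nlinarith [hrc]
  have hs : Real.sin (α / 2) = Real.sqrt ((1 - c) / 2) := by
    rw [Real.sin_half_eq_sqrt hα0 (by linarith [Real.pi_pos]), hcos]
  have hcc : Real.cos (α / 2) = Real.sqrt ((1 + c) / 2) := by
    rw [Real.cos_half (by linarith [Real.pi_pos]) hαπ.le, hcos]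
  have htan : Real.tan (α / 2) = Real.sqrt (1 - c) / Real.sqrt (1 + c) := by
    rw [Real.tan_eq_sin_div_cos, hs, hcc,
      Real.sqrt_div (by linarith : (0:ℝ) ≤ 1 - c),
      Real.sqrt_div h1c.le]
    have h2 : Real.sqrt 2 ≠ 0 := by positivity
    field_simp
  have hsplit : Real.sqrt (1 - c ^ 2) / (1 + c) = Real.sqrt (1 - c) / Real.sqrt (1 + c) := by
    have h1 : (1:ℝ) - c ^ 2 = (1 - c) * (1 + c) := by ring
    have hsq : Real.sqrt (1 + c) ^ 2 = 1 + c := Real.sq_sqrt h1c.le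
    have hpos : 0 < Real.sqrt (1 + c) := Real.sqrt_pos.mpr h1c
    rw [h1, Real.sqrt_mul (by linarith : (0:ℝ) ≤ 1 - c)]
    field_simp
    nlinarith [Real.sqrt_nonneg (1 - c)]
  have hstep : 2 * |y| ≤ Real.tan (α / 2) := by
    rw [habsy, htan, ← hsplit, le_div_iff₀ h1c]
    nlinarith [Real.sqrt_nonneg (1 - c ^ 2)]
  have hmono : Real.tan (α / 2) ≤ Real.tan (θ / 2) := by
    rcases eq_or_lt_of_le hαθ with h | h
    · rw [h]
    · exact (Real.tan_lt_tan_of_nonneg_of_lt_pi_div_two (by linarith)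
        (by linarith) (by linarith)).le
  have hlhs : |wp.im| + |wm.im| = 2 * |y| := by
    rw [him, abs_neg, ← hy]; ring
  rw [hlhs]
  exact hstep.trans hmono
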